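/- Let m ≥ 1 and let P(z) = ∏_{j=1}^m (z - e^{iφ_j}) be a monic polynomial with all zeros on the unit circle. Let Ψ = mπ + ∑_{j=1}^m φ_j and θ_l = (Ψ + 2πl)/m for l = 0, …, m−1. Then (1/m) ∑_{l=0}^{m−1} P(e^{iθ_l}) = 2 e^{iΨ}. In particular, sup_{|z|=1} |P(z)| ≥ 2. -/

import Mathlib

open Real Complex

theorem stmt_1 (m : ℕ) (hm : 1 ≤ m) (φ : Fin m → ℝ)
    (P : ℂ → ℂ)
    (hP : ∀ z : ℂ, P z = ∏ j : Fin m, (z - Complex.exp ((φ j : ℂ) * Complex.I)))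
    (Ψ : ℝ) (hΨ : Ψ = m * Real.pi + ∑ j : Fin m, φ j)
    (θ : ℕ → ℝ) (hθ : ∀ l : ℕ, θ l = (Ψ + 2 * Real.pi * l) / m) :
    (1 / (m : ℂ)) * ∑ l ∈ Finset.range m, P (Complex.exp ((θ l : ℂ) * Complex.I))
      = 2 * Complex.exp ((Ψ : ℂ) * Complex.I) ∧
    2 ≤ ⨆ t : ℝ, ‖P (Complex.exp ((t : ℂ) * Complex.I))‖ := by
  have hmne : m ≠ 0 := by omega
  have hm0 : (m : ℂ) ≠ 0 := Nat.cast_ne_zero.mpr hmne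
  -- abbreviations (kept as plain functions, no `set`)
  let a : Fin m → ℂ := fun j => Complex.exp ((φ j : ℂ) * Complex.I)
  let w : ℕ → ℂ := fun l => Complex.exp ((θ l : ℂ) * Complex.I)
  let eΨ : ℂ := Complex.exp ((Ψ : ℂ) * Complex.I)
  let ζ : ℂ := Complex.exp (2 * (π : ℂ) * Complex.I / m)
  let c : ℂ := Complex.exp ((Ψ : ℂ) / m * Complex.I)
  have hprim : IsPrimitiveRoot ζ m := Complex.isPrimitiveRoot_exp m hmne
  have hζm : ζ ^ m = 1 := hprim.pow_eq_one
  have hcmpow : c ^ m = eΨ := by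
    show Complex.exp ((Ψ : ℂ) / m * Complex.I) ^ m = Complex.exp ((Ψ : ℂ) * Complex.I)
    rw [← Complex.exp_nat_mul]
    congr 1
    field_simp
  have hwl : ∀ l : ℕ, w l = c * ζ ^ l := by
    intro l
    show Complex.exp ((θ l : ℂ) * Complex.I)
        = Complex.exp ((Ψ : ℂ) / m * Complex.I) * Complex.exp (2 * (π : ℂ) * Complex.I / m) ^ l
    rw [← Complex.exp_nat_mul, ← Complex.exp_add]
    congr 1
    rw [hθ l]
    push_cast
    field_simp
  have hexpsum : Complex.exp ((↑(∑ j : Fin m, φ j) : ℂ) * Complex.I)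
      = ∏ j : Fin m, a j := by
    rw [← Complex.exp_sum]
    congr 1
    push_cast
    rw [Finset.sum_mul]
  have heΨ' : eΨ = (-1 : ℂ) ^ m * ∏ j : Fin m, a j := by
    show Complex.exp ((Ψ : ℂ) * Complex.I) = _
    rw [hΨ, ← hexpsum]
    push_cast
    rw [add_mul, Complex.exp_add]
    congr 1
    rw [mul_assoc, Complex.exp_nat_mul, Complex.exp_pi_mul_I]
  -- geometric sums
  have hS : ∀ k : ℕ, ∑ l ∈ Finset.range m, (w l) ^ k
      = c ^ k * ∑ l ∈ Finset.range m, (ζ ^ k) ^ l := by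
    intro k
    rw [Finset.mul_sum]
    exact Finset.sum_congr rfl fun l _ => by
      rw [hwl l, mul_pow, ← pow_mul, ← pow_mul, mul_comm l k]
  have hS0 : ∑ l ∈ Finset.range m, (w l) ^ 0 = (m : ℂ) := by simp
  have hSm : ∑ l ∈ Finset.range m, (w l) ^ m = (m : ℂ) * eΨ := by
    rw [hS m, hcmpow, hζm]
    simp [mul_comm]
  have hSmid : ∀ k : ℕ, 0 < k → k < m → ∑ l ∈ Finset.range m, (w l) ^ k = 0 := by
    intro k hk1 hk2
    have hne : ζ ^ k ≠ 1 := hprim.pow_ne_one_of_pos_of_lt hk1.ne' hk2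
    rw [hS, geom_sum_eq hne, ← pow_mul, mul_comm k m, pow_mul, hζm, one_pow]
    simp
  -- the polynomial
  set Q : Polynomial ℂ := ∏ j : Fin m, (Polynomial.X - Polynomial.C (a j)) with hQ
  have hQeval : ∀ z : ℂ, Q.eval z = P z := by
    intro z
    rw [hP]
    simp [hQ, Polynomial.eval_prod, a]
  have hmonic : Q.Monic := Polynomial.monic_prod_of_monic _ _ (fun j _ => Polynomial.monic_X_sub_C _)
  have hdeg : Q.natDegree = m := by
    rw [hQ, Polynomial.natDegree_prod_of_monic _ _ (fun j _ => Polynomial.monic_X_sub_C _)]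
    simp
  have hcm : Q.coeff m = 1 := by
    have := hmonic.coeff_natDegree
    rwa [hdeg] at this
  have hc0 : Q.coeff 0 = eΨ := by
    rw [Polynomial.coeff_zero_eq_eval_zero, hQ, Polynomial.eval_prod]
    simp only [Polynomial.eval_sub, Polynomial.eval_X, Polynomial.eval_C, zero_sub]
    rw [heΨ']
    calc ∏ j : Fin m, -(a j) = ∏ j : Fin m, ((-1 : ℂ) * a j) := by
          simp [neg_one_mul]
      _ = (-1 : ℂ) ^ m * ∏ j : Fin m, a j := by
          rw [Finset.prod_mul_distrib]
          simp
  clear_value Q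
  clear hQ hmonic
  -- the key sum
  have key : ∑ l ∈ Finset.range m, P (w l) = 2 * m * eΨ := by
    have expand : ∀ l : ℕ, P (w l)
        = ∑ k ∈ Finset.range (m + 1), Q.coeff k * (w l) ^ k := by
      intro l
      rw [← hQeval, Polynomial.eval_eq_sum_range, hdeg]
    calc ∑ l ∈ Finset.range m, P (w l)
        = ∑ l ∈ Finset.range m, ∑ k ∈ Finset.range (m + 1), Q.coeff k * (w l) ^ k := by
          exact Finset.sum_congr rfl fun l _ => expand l
      _ = ∑ k ∈ Finset.range (m + 1), Q.coeff k * ∑ l ∈ Finset.range m, (w l) ^ k := by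
          rw [Finset.sum_comm]
          exact Finset.sum_congr rfl fun k _ => (Finset.mul_sum _ _ _).symm
      _ = 2 * m * eΨ := by
          have hmid : ∀ k ∈ Finset.range (m + 1), k ∉ ({0, m} : Finset ℕ) →
              Q.coeff k * ∑ l ∈ Finset.range m, (w l) ^ k = 0 := by
            intro k hk hk'
            simp only [Finset.mem_insert, Finset.mem_singleton, not_or] at hk'
            have hk2 : k < m := by
              have := Finset.mem_range.mp hk
              omega
            rw [hSmid k (Nat.pos_of_ne_zero hk'.1) hk2, mul_zero]
          have hsub : ({0, m} : Finset ℕ) ⊆ Finset.range (m + 1) := by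
            intro x hx
            simp only [Finset.mem_insert, Finset.mem_singleton] at hx
            rcases hx with h | h <;> simp [h, Finset.mem_range]
          rw [← Finset.sum_subset hsub (fun k hk hk' => hmid k hk hk')]
          rw [Finset.sum_pair (by omega : (0 : ℕ) ≠ m)]
          rw [hS0, hSm, hc0, hcm]
          ring
  refine ⟨?_, ?_⟩
  · rw [key]
    field_simp
    ring
  · -- sup bound
    set F : ℝ → ℝ := fun t => ‖P (Complex.exp ((t : ℂ) * Complex.I))‖ with hF
    have habs_a : ∀ j : Fin m, ‖a j‖ = 1 := by
      intro j
      show ‖Complex.exp ((φ j : ℂ) * Complex.I)‖ = 1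
      rw [Complex.norm_exp]
      norm_num [Complex.mul_I_re, Complex.ofReal_im]
    have hbdd : BddAbove (Set.range F) := by
      refine ⟨2 ^ m, ?_⟩
      rintro x ⟨t, rfl⟩
      rw [hF]
      simp only
      rw [hP, norm_prod]
      calc ∏ j : Fin m, ‖Complex.exp ((t : ℂ) * Complex.I) - a j‖
          ≤ ∏ j : Fin m, 2 := by
            apply Finset.prod_le_prod
            · intro j _; positivity
            · intro j _
              calc ‖Complex.exp ((t : ℂ) * Complex.I) - a j‖
                  ≤ ‖Complex.exp ((t : ℂ) * Complex.I)‖ + ‖a j‖ := by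
                    exact norm_sub_le _ _
                _ = 2 := by
                    rw [habs_a j, Complex.norm_exp]
                    norm_num [Complex.mul_I_re, Complex.ofReal_im]
        _ = 2 ^ m := by simp
    have hsum : 2 * (m : ℝ) ≤ ∑ l ∈ Finset.range m, F (θ l) := by
      have habs : ‖∑ l ∈ Finset.range m, P (w l)‖ = 2 * m := by
        rw [key, norm_mul, norm_mul]
        have : ‖eΨ‖ = 1 := by
          show ‖Complex.exp ((Ψ : ℂ) * Complex.I)‖ = 1
          rw [Complex.norm_exp]
          norm_num [Complex.mul_I_re, Complex.ofReal_im]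
        rw [this]
        simp
      calc (2 : ℝ) * m = ‖∑ l ∈ Finset.range m, P (w l)‖ := habs.symm
        _ ≤ ∑ l ∈ Finset.range m, ‖P (w l)‖ := by
            exact norm_sum_le _ _
        _ = ∑ l ∈ Finset.range m, F (θ l) := rfl
    obtain ⟨l, hl, hl2⟩ : ∃ l ∈ Finset.range m, 2 ≤ F (θ l) := by
      by_contra h
      push_neg at h
      have hlt : ∑ l ∈ Finset.range m, F (θ l) < ∑ l ∈ Finset.range m, (2 : ℝ) := by
        apply Finset.sum_lt_sum_of_nonempty
        · exact Finset.nonempty_range_iff.mpr hmne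
        · exact fun i hi => h i hi
      simp only [Finset.sum_const, Finset.card_range, nsmul_eq_mul] at hlt
      linarith
    exact le_trans hl2 (le_ciSup hbdd (θ l))
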